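/- Let μ ∈ (0, 1/2), let c_J := −1 − 2√(μ(1−μ)), and let l := (1 − μ − √(μ(1−μ)))/(1 − 2μ). Define V : ℝ → ℝ by V(q) := −(1−μ)/√(q² + 2(q − l)²) − μ/√((q − 1)² + 2(q − l)²) − c_J. Then V(l) = 0, V′(l) = 0, V″(l) = 0, and V‴(l) > 0. -/

import Mathlib

private lemma alg1 (c f' u F : ℝ) (hu : 0 < u) (hF : u^2 = F) :
    (0 * u - c * (f' / (2*u))) / u ^ 2 = -(c*f') / (2*F*u) := by
  subst hF
  rw [div_eq_div_iff (by positivity) (by positivity)]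
  field_simp; ring

private lemma D1 {f : ℝ → ℝ} {f' x : ℝ} (c : ℝ) (hf : HasDerivAt f f' x) (hx : 0 < f x) :
    HasDerivAt (fun q => c / Real.sqrt (f q))
      (-(c * f') / (2 * f x * Real.sqrt (f x))) x := by
  have hu : 0 < Real.sqrt (f x) := Real.sqrt_pos.2 hx
  have hsq : Real.sqrt (f x) ^ 2 = f x := Real.sq_sqrt hx.le
  have hs : HasDerivAt (fun q => Real.sqrt (f q)) (f' / (2 * Real.sqrt (f x))) x := by
    have h := (Real.hasDerivAt_sqrt hx.ne').comp x hf
    exact h.congr_deriv (by ring)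
  have h := (hasDerivAt_const x c).div hs hu.ne'
  rw [← alg1 c f' (Real.sqrt (f x)) (f x) hu hsq]
  exact h

private lemma alg2 (c d f' x u F : ℝ) (hu : 0 < u) (hF : u^2 = F) :
    (c * 6 * (2 * F * u) - c * (6*x + d) * (2 * f' * u + 2 * F * (f' / (2*u)))) / (2 * F * u) ^ 2
      = c * u * (12 * F - 3 * (6*x + d) * f') / (4 * F^3) := by
  subst hF
  rw [div_eq_div_iff (by positivity) (by positivity)]
  field_simp; ring

private lemma D2 {f : ℝ → ℝ} {f' x : ℝ} (c d : ℝ) (hf : HasDerivAt f f' x) (hx : 0 < f x) :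
    HasDerivAt (fun q => c * (6*q + d) / (2 * f q * Real.sqrt (f q)))
      (c * Real.sqrt (f x) * (12 * f x - 3 * (6*x + d) * f') / (4 * (f x)^3)) x := by
  have hu : 0 < Real.sqrt (f x) := Real.sqrt_pos.2 hx
  have hsq : Real.sqrt (f x) ^ 2 = f x := Real.sq_sqrt hx.le
  have hs : HasDerivAt (fun q => Real.sqrt (f q)) (f' / (2 * Real.sqrt (f x))) x := by
    have h := (Real.hasDerivAt_sqrt hx.ne').comp x hf
    exact h.congr_deriv (by ring)
  have hnum : HasDerivAt (fun q : ℝ => c * (6*q + d)) (c * 6) x := by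
    have h := (((hasDerivAt_id x).const_mul 6).add_const d).const_mul c
    exact h.congr_deriv (by ring)
  have hden : HasDerivAt (fun q => 2 * f q * Real.sqrt (f q))
      (2 * f' * Real.sqrt (f x) + 2 * f x * (f' / (2 * Real.sqrt (f x)))) x :=
    (hf.const_mul 2).mul hs
  have h := hnum.div hden (by positivity)
  rw [← alg2 c d f' x (Real.sqrt (f x)) (f x) hu hsq]
  exact h

private lemma alg3 (c d f' x u F : ℝ) (hu : 0 < u) (hF : u^2 = F) :
    ((c * (f' / (2*u)) * (12 * F - 3 * (6*x + d)^2)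
        + c * u * (12 * f' - 3 * (2 * (6*x + d) ^ 1 * 6)))
       * (4 * F^3)
      - c * u * (12 * F - 3 * (6*x + d)^2) * (4 * (3 * F ^ 2 * f'))) / (4 * F^3) ^ 2
      = c * u * ((15/2) * f' * (6*x + d)^2 - 18 * F * f' - 36 * F * (6*x + d)) / (4 * F^4) := by
  subst hF
  rw [div_eq_div_iff (by positivity) (by positivity)]
  field_simp; ring

private lemma D3 {f : ℝ → ℝ} {f' x : ℝ} (c d : ℝ) (hf : HasDerivAt f f' x) (hx : 0 < f x) :
    HasDerivAt (fun q => c * Real.sqrt (f q) * (12 * f q - 3 * (6*q + d)^2) / (4 * (f q)^3))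
      (c * Real.sqrt (f x) * ((15/2) * f' * (6*x + d)^2 - 18 * f x * f' - 36 * f x * (6*x + d))
        / (4 * (f x)^4)) x := by
  have hu : 0 < Real.sqrt (f x) := Real.sqrt_pos.2 hx
  have hsq : Real.sqrt (f x) ^ 2 = f x := Real.sq_sqrt hx.le
  have hs : HasDerivAt (fun q => Real.sqrt (f q)) (f' / (2 * Real.sqrt (f x))) x := by
    have h := (Real.hasDerivAt_sqrt hx.ne').comp x hf
    exact h.congr_deriv (by ring)
  have hlin : HasDerivAt (fun q : ℝ => 6*q + d) 6 x := by
    have h := ((hasDerivAt_id x).const_mul 6).add_const d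
    exact h.congr_deriv (by ring)
  have hinner : HasDerivAt (fun q : ℝ => 12 * f q - 3 * (6*q + d)^2)
      (12 * f' - 3 * (2 * (6*x + d) ^ 1 * 6)) x :=
    (hf.const_mul 12).sub ((hlin.pow 2).const_mul 3)
  have hnum : HasDerivAt (fun q => c * Real.sqrt (f q) * (12 * f q - 3 * (6*q + d)^2))
      (c * (f' / (2 * Real.sqrt (f x))) * (12 * f x - 3 * (6*x + d)^2)
        + c * Real.sqrt (f x) * (12 * f' - 3 * (2 * (6*x + d) ^ 1 * 6))) x :=
    (hs.const_mul c).mul hinner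
  have hden : HasDerivAt (fun q => 4 * (f q)^3) (4 * (3 * f x ^ 2 * f')) x := by
    have h := (hf.pow 3).const_mul 4
    exact h.congr_deriv (by norm_num)
  have h := hnum.div hden (by positivity)
  rw [← alg3 c d f' x (Real.sqrt (f x)) (f x) hu hsq]
  exact h

set_option maxHeartbeats 2000000 in
/-- The restriction `V` of `U − c_J` to the tangent line `q₂ = √2(q₁ − l)` vanishes to
second order at `l`, with positive third derivative, when `μ ∈ (0, 1/2)`. -/
theorem stmt_14 (μ : ℝ) (hμ : μ ∈ Set.Ioo (0 : ℝ) (1 / 2)) :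
    letI cJ : ℝ := -1 - 2 * Real.sqrt (μ * (1 - μ))
    letI l : ℝ := (1 - μ - Real.sqrt (μ * (1 - μ))) / (1 - 2 * μ)
    letI V : ℝ → ℝ := fun q =>
      -(1 - μ) / Real.sqrt (q ^ 2 + 2 * (q - l) ^ 2)
        - μ / Real.sqrt ((q - 1) ^ 2 + 2 * (q - l) ^ 2) - cJ
    V l = 0 ∧ deriv V l = 0 ∧ iteratedDeriv 2 V l = 0 ∧ iteratedDeriv 3 V l > 0 := by
  obtain ⟨hμ0, hμ2⟩ := hμ
  show
    (fun q =>
      -(1 - μ) / Real.sqrt (q ^ 2 + 2 * (q - (1 - μ - Real.sqrt (μ * (1 - μ))) / (1 - 2 * μ)) ^ 2)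
        - μ / Real.sqrt ((q - 1) ^ 2 + 2 * (q - (1 - μ - Real.sqrt (μ * (1 - μ))) / (1 - 2 * μ)) ^ 2)
        - (-1 - 2 * Real.sqrt (μ * (1 - μ))))
      ((1 - μ - Real.sqrt (μ * (1 - μ))) / (1 - 2 * μ)) = 0 ∧ _ ∧ _ ∧ _
  obtain ⟨s, hsdef⟩ : ∃ s, Real.sqrt (μ * (1 - μ)) = s := ⟨_, rfl⟩
  rw [hsdef]
  obtain ⟨l, hldef⟩ : ∃ l, (1 - μ - s) / (1 - 2 * μ) = l := ⟨_, rfl⟩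
  rw [hldef]
  have h2μ : (0:ℝ) < 1 - 2 * μ := by linarith
  have h1μ : (0:ℝ) < 1 - μ := by linarith
  have hs0 : 0 < s := hsdef ▸ Real.sqrt_pos.2 (by positivity)
  have hs2 : s ^ 2 = μ * (1 - μ) := by rw [← hsdef]; exact Real.sq_sqrt (by positivity)
  have hsμ : μ < s := by nlinarith [hs2, hs0]
  have hs1μ : s < 1 - μ := by nlinarith [hs2, hs0]
  have hl0 : 0 < l := hldef ▸ div_pos (by linarith) h2μ
  have hl1 : l < 1 := by rw [← hldef, div_lt_one h2μ]; linarith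
  have h1l : 0 < 1 - l := by linarith
  have hlid : l * (1 - 2 * μ) = 1 - μ - s := by
    rw [← hldef]; exact div_mul_cancel₀ _ h2μ.ne'
  have hA1 : l * (1 - μ + s) = 1 - μ := by
    have h : l * (1 - μ + s) * (1 - 2 * μ) = (1 - μ) * (1 - 2 * μ) := by
      linear_combination (1 - μ + s) * hlid - hs2
    exact mul_right_cancel₀ h2μ.ne' h
  have hB1 : (1 - l) * (μ + s) = μ := by
    have h : (1 - l) * (μ + s) * (1 - 2 * μ) = μ * (1 - 2 * μ) := by
      linear_combination -(μ + s) * hlid + hs2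
    exact mul_right_cancel₀ h2μ.ne' h
  have hA : ∀ q : ℝ, 0 < q ^ 2 + 2 * (q - l) ^ 2 := fun q => by
    nlinarith [sq_nonneg (3 * q - 2 * l), mul_pos hl0 hl0]
  have hB : ∀ q : ℝ, 0 < (q - 1) ^ 2 + 2 * (q - l) ^ 2 := fun q => by
    nlinarith [sq_nonneg (3 * q - 1 - 2 * l), mul_pos h1l h1l]
  have hsA : Real.sqrt (l ^ 2 + 2 * (l - l) ^ 2) = l := by
    rw [show l ^ 2 + 2 * (l - l) ^ 2 = l ^ 2 by ring]; exact Real.sqrt_sq hl0.le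
  have hsB : Real.sqrt ((l - 1) ^ 2 + 2 * (l - l) ^ 2) = 1 - l := by
    rw [show (l - 1) ^ 2 + 2 * (l - l) ^ 2 = (1 - l) ^ 2 by ring]; exact Real.sqrt_sq h1l.le
  have hfA : ∀ x : ℝ, HasDerivAt (fun q : ℝ => q ^ 2 + 2 * (q - l) ^ 2) (6 * x - 4 * l) x := by
    intro x
    have h1 : HasDerivAt (fun q : ℝ => q ^ 2) ((2:ℕ) * x ^ (2-1)) x := hasDerivAt_pow 2 x
    have h2 : HasDerivAt (fun q : ℝ => 2 * (q - l) ^ 2)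
        (2 * ((2:ℕ) * (x - l) ^ (2-1) * 1)) x :=
      (((hasDerivAt_id x).sub_const l).pow 2).const_mul 2
    have h := h1.add h2
    exact h.congr_deriv (by push_cast; ring)
  have hfB : ∀ x : ℝ, HasDerivAt (fun q : ℝ => (q - 1) ^ 2 + 2 * (q - l) ^ 2)
      (6 * x - 4 * l - 2) x := by
    intro x
    have h1 : HasDerivAt (fun q : ℝ => (q - 1) ^ 2) ((2:ℕ) * (x - 1) ^ (2-1) * 1) x :=
      ((hasDerivAt_id x).sub_const 1).pow 2
    have h2 : HasDerivAt (fun q : ℝ => 2 * (q - l) ^ 2)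
        (2 * ((2:ℕ) * (x - l) ^ (2-1) * 1)) x :=
      (((hasDerivAt_id x).sub_const l).pow 2).const_mul 2
    have h := h1.add h2
    exact h.congr_deriv (by push_cast; ring)
  -- first derivative
  have hd1 : ∀ x : ℝ, HasDerivAt
      (fun q : ℝ => -(1 - μ) / Real.sqrt (q ^ 2 + 2 * (q - l) ^ 2)
        - μ / Real.sqrt ((q - 1) ^ 2 + 2 * (q - l) ^ 2) - (-1 - 2 * s))
      (-(-(1 - μ) * (6 * x - 4 * l)) / (2 * (x ^ 2 + 2 * (x - l) ^ 2)
          * Real.sqrt (x ^ 2 + 2 * (x - l) ^ 2))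
        - -(μ * (6 * x - 4 * l - 2)) / (2 * ((x - 1) ^ 2 + 2 * (x - l) ^ 2)
          * Real.sqrt ((x - 1) ^ 2 + 2 * (x - l) ^ 2))) x := fun x =>
    ((D1 (-(1 - μ)) (hfA x) (hA x)).sub (D1 μ (hfB x) (hB x))).sub_const (-1 - 2 * s)
  have e1 : (deriv fun q : ℝ => -(1 - μ) / Real.sqrt (q ^ 2 + 2 * (q - l) ^ 2)
        - μ / Real.sqrt ((q - 1) ^ 2 + 2 * (q - l) ^ 2) - (-1 - 2 * s))
      = fun q : ℝ => (1 - μ) * (6 * q + -(4 * l)) / (2 * (q ^ 2 + 2 * (q - l) ^ 2)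
          * Real.sqrt (q ^ 2 + 2 * (q - l) ^ 2))
        + μ * (6 * q + (-(4 * l) - 2)) / (2 * ((q - 1) ^ 2 + 2 * (q - l) ^ 2)
          * Real.sqrt ((q - 1) ^ 2 + 2 * (q - l) ^ 2)) := by
    funext q
    rw [(hd1 q).deriv]
    ring
  -- second derivative
  have hd2 : ∀ x : ℝ, HasDerivAt
      (fun q : ℝ => (1 - μ) * (6 * q + -(4 * l)) / (2 * (q ^ 2 + 2 * (q - l) ^ 2)
          * Real.sqrt (q ^ 2 + 2 * (q - l) ^ 2))
        + μ * (6 * q + (-(4 * l) - 2)) / (2 * ((q - 1) ^ 2 + 2 * (q - l) ^ 2)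
          * Real.sqrt ((q - 1) ^ 2 + 2 * (q - l) ^ 2)))
      ((1 - μ) * Real.sqrt (x ^ 2 + 2 * (x - l) ^ 2) * (12 * (x ^ 2 + 2 * (x - l) ^ 2)
          - 3 * (6 * x + -(4 * l)) * (6 * x - 4 * l)) / (4 * (x ^ 2 + 2 * (x - l) ^ 2) ^ 3)
        + μ * Real.sqrt ((x - 1) ^ 2 + 2 * (x - l) ^ 2) * (12 * ((x - 1) ^ 2 + 2 * (x - l) ^ 2)
          - 3 * (6 * x + (-(4 * l) - 2)) * (6 * x - 4 * l - 2))
          / (4 * ((x - 1) ^ 2 + 2 * (x - l) ^ 2) ^ 3)) x := fun x =>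
    (D2 (1 - μ) (-(4 * l)) (hfA x) (hA x)).add (D2 μ (-(4 * l) - 2) (hfB x) (hB x))
  have e2 : (deriv fun q : ℝ => (1 - μ) * (6 * q + -(4 * l)) / (2 * (q ^ 2 + 2 * (q - l) ^ 2)
          * Real.sqrt (q ^ 2 + 2 * (q - l) ^ 2))
        + μ * (6 * q + (-(4 * l) - 2)) / (2 * ((q - 1) ^ 2 + 2 * (q - l) ^ 2)
          * Real.sqrt ((q - 1) ^ 2 + 2 * (q - l) ^ 2)))
      = fun q : ℝ => (1 - μ) * Real.sqrt (q ^ 2 + 2 * (q - l) ^ 2)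
          * (12 * (q ^ 2 + 2 * (q - l) ^ 2) - 3 * (6 * q + -(4 * l)) ^ 2)
          / (4 * (q ^ 2 + 2 * (q - l) ^ 2) ^ 3)
        + μ * Real.sqrt ((q - 1) ^ 2 + 2 * (q - l) ^ 2)
          * (12 * ((q - 1) ^ 2 + 2 * (q - l) ^ 2) - 3 * (6 * q + (-(4 * l) - 2)) ^ 2)
          / (4 * ((q - 1) ^ 2 + 2 * (q - l) ^ 2) ^ 3) := by
    funext q
    rw [(hd2 q).deriv]
    ring
  -- third derivative
  have hd3 : ∀ x : ℝ, HasDerivAt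
      (fun q : ℝ => (1 - μ) * Real.sqrt (q ^ 2 + 2 * (q - l) ^ 2)
          * (12 * (q ^ 2 + 2 * (q - l) ^ 2) - 3 * (6 * q + -(4 * l)) ^ 2)
          / (4 * (q ^ 2 + 2 * (q - l) ^ 2) ^ 3)
        + μ * Real.sqrt ((q - 1) ^ 2 + 2 * (q - l) ^ 2)
          * (12 * ((q - 1) ^ 2 + 2 * (q - l) ^ 2) - 3 * (6 * q + (-(4 * l) - 2)) ^ 2)
          / (4 * ((q - 1) ^ 2 + 2 * (q - l) ^ 2) ^ 3))
      ((1 - μ) * Real.sqrt (x ^ 2 + 2 * (x - l) ^ 2)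
          * ((15/2) * (6 * x - 4 * l) * (6 * x + -(4 * l)) ^ 2
            - 18 * (x ^ 2 + 2 * (x - l) ^ 2) * (6 * x - 4 * l)
            - 36 * (x ^ 2 + 2 * (x - l) ^ 2) * (6 * x + -(4 * l)))
          / (4 * (x ^ 2 + 2 * (x - l) ^ 2) ^ 4)
        + μ * Real.sqrt ((x - 1) ^ 2 + 2 * (x - l) ^ 2)
          * ((15/2) * (6 * x - 4 * l - 2) * (6 * x + (-(4 * l) - 2)) ^ 2
            - 18 * ((x - 1) ^ 2 + 2 * (x - l) ^ 2) * (6 * x - 4 * l - 2)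
            - 36 * ((x - 1) ^ 2 + 2 * (x - l) ^ 2) * (6 * x + (-(4 * l) - 2)))
          / (4 * ((x - 1) ^ 2 + 2 * (x - l) ^ 2) ^ 4)) x := fun x =>
    (D3 (1 - μ) (-(4 * l)) (hfA x) (hA x)).add (D3 μ (-(4 * l) - 2) (hfB x) (hB x))
  have e3 : (deriv fun q : ℝ => (1 - μ) * Real.sqrt (q ^ 2 + 2 * (q - l) ^ 2)
          * (12 * (q ^ 2 + 2 * (q - l) ^ 2) - 3 * (6 * q + -(4 * l)) ^ 2)
          / (4 * (q ^ 2 + 2 * (q - l) ^ 2) ^ 3)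
        + μ * Real.sqrt ((q - 1) ^ 2 + 2 * (q - l) ^ 2)
          * (12 * ((q - 1) ^ 2 + 2 * (q - l) ^ 2) - 3 * (6 * q + (-(4 * l) - 2)) ^ 2)
          / (4 * ((q - 1) ^ 2 + 2 * (q - l) ^ 2) ^ 3))
      = fun x : ℝ => (1 - μ) * Real.sqrt (x ^ 2 + 2 * (x - l) ^ 2)
          * ((15/2) * (6 * x - 4 * l) * (6 * x + -(4 * l)) ^ 2
            - 18 * (x ^ 2 + 2 * (x - l) ^ 2) * (6 * x - 4 * l)
            - 36 * (x ^ 2 + 2 * (x - l) ^ 2) * (6 * x + -(4 * l)))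
          / (4 * (x ^ 2 + 2 * (x - l) ^ 2) ^ 4)
        + μ * Real.sqrt ((x - 1) ^ 2 + 2 * (x - l) ^ 2)
          * ((15/2) * (6 * x - 4 * l - 2) * (6 * x + (-(4 * l) - 2)) ^ 2
            - 18 * ((x - 1) ^ 2 + 2 * (x - l) ^ 2) * (6 * x - 4 * l - 2)
            - 36 * ((x - 1) ^ 2 + 2 * (x - l) ^ 2) * (6 * x + (-(4 * l) - 2)))
          / (4 * ((x - 1) ^ 2 + 2 * (x - l) ^ 2) ^ 4) := by
    funext q
    exact (hd3 q).deriv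
  refine ⟨?_, ?_, ?_, ?_⟩
  · -- V l = 0
    show -(1 - μ) / Real.sqrt (l ^ 2 + 2 * (l - l) ^ 2)
        - μ / Real.sqrt ((l - 1) ^ 2 + 2 * (l - l) ^ 2) - (-1 - 2 * s) = 0
    rw [hsA, hsB]
    have E1 : (1 - μ) / l = 1 - μ + s := by
      rw [div_eq_iff hl0.ne']; linear_combination -hA1
    have E2 : μ / (1 - l) = μ + s := by
      rw [div_eq_iff h1l.ne']; linear_combination -hB1
    have h : -(1 - μ) / l - μ / (1 - l) - (-1 - 2 * s)
        = -((1 - μ) / l) - μ / (1 - l) + 1 + 2 * s := by ring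
    rw [h, E1, E2]; ring
  · -- deriv V l = 0
    rw [e1]
    show (1 - μ) * (6 * l + -(4 * l)) / (2 * (l ^ 2 + 2 * (l - l) ^ 2)
          * Real.sqrt (l ^ 2 + 2 * (l - l) ^ 2))
        + μ * (6 * l + (-(4 * l) - 2)) / (2 * ((l - 1) ^ 2 + 2 * (l - l) ^ 2)
          * Real.sqrt ((l - 1) ^ 2 + 2 * (l - l) ^ 2)) = 0
    rw [hsA, hsB]
    have E3 : (1 - μ) / l ^ 2 = (1 - μ + s) ^ 2 / (1 - μ) := by
      rw [div_eq_div_iff (by positivity) h1μ.ne']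
      linear_combination (-(l * (1 - μ + s)) - (1 - μ)) * hA1
    have E4 : μ / (1 - l) ^ 2 = (μ + s) ^ 2 / μ := by
      rw [div_eq_div_iff (by positivity) hμ0.ne']
      linear_combination (-((1 - l) * (μ + s)) - μ) * hB1
    have key : (1 - μ) / l ^ 2 - μ / (1 - l) ^ 2 = 0 := by
      rw [E3, E4, div_sub_div _ _ h1μ.ne' hμ0.ne', div_eq_zero_iff]
      left; linear_combination (2 * μ - 1) * hs2
    have c1 : (1 - μ) * (6 * l + -(4 * l)) / (2 * (l ^ 2 + 2 * (l - l) ^ 2) * l)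
        = (1 - μ) / l ^ 2 := by
      rw [div_eq_div_iff (mul_ne_zero (mul_ne_zero two_ne_zero (hA l).ne') hl0.ne')
        (pow_pos hl0 2).ne']
      ring
    have c2 : μ * (6 * l + (-(4 * l) - 2)) / (2 * ((l - 1) ^ 2 + 2 * (l - l) ^ 2) * (1 - l))
        = (-μ) / (1 - l) ^ 2 := by
      rw [div_eq_div_iff (mul_ne_zero (mul_ne_zero two_ne_zero (hB l).ne') h1l.ne')
        (pow_pos h1l 2).ne']
      ring
    rw [c1, c2]
    linear_combination key
  · -- iteratedDeriv 2 V l = 0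
    rw [iteratedDeriv_succ, iteratedDeriv_one, e1, e2]
    show (1 - μ) * Real.sqrt (l ^ 2 + 2 * (l - l) ^ 2)
          * (12 * (l ^ 2 + 2 * (l - l) ^ 2) - 3 * (6 * l + -(4 * l)) ^ 2)
          / (4 * (l ^ 2 + 2 * (l - l) ^ 2) ^ 3)
        + μ * Real.sqrt ((l - 1) ^ 2 + 2 * (l - l) ^ 2)
          * (12 * ((l - 1) ^ 2 + 2 * (l - l) ^ 2) - 3 * (6 * l + (-(4 * l) - 2)) ^ 2)
          / (4 * ((l - 1) ^ 2 + 2 * (l - l) ^ 2) ^ 3) = 0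
    rw [hsA, hsB]
    ring
  · -- iteratedDeriv 3 V l > 0
    rw [show (3:ℕ) = 2 + 1 from rfl, iteratedDeriv_succ, iteratedDeriv_succ,
      iteratedDeriv_one, e1, e2, e3]
    show (1 - μ) * Real.sqrt (l ^ 2 + 2 * (l - l) ^ 2)
          * ((15/2) * (6 * l - 4 * l) * (6 * l + -(4 * l)) ^ 2
            - 18 * (l ^ 2 + 2 * (l - l) ^ 2) * (6 * l - 4 * l)
            - 36 * (l ^ 2 + 2 * (l - l) ^ 2) * (6 * l + -(4 * l)))
          / (4 * (l ^ 2 + 2 * (l - l) ^ 2) ^ 4)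
        + μ * Real.sqrt ((l - 1) ^ 2 + 2 * (l - l) ^ 2)
          * ((15/2) * (6 * l - 4 * l - 2) * (6 * l + (-(4 * l) - 2)) ^ 2
            - 18 * ((l - 1) ^ 2 + 2 * (l - l) ^ 2) * (6 * l - 4 * l - 2)
            - 36 * ((l - 1) ^ 2 + 2 * (l - l) ^ 2) * (6 * l + (-(4 * l) - 2)))
          / (4 * ((l - 1) ^ 2 + 2 * (l - l) ^ 2) ^ 4) > 0
    rw [hsA, hsB]
    have c1 : (1 - μ) * l
          * ((15/2) * (6 * l - 4 * l) * (6 * l + -(4 * l)) ^ 2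
            - 18 * (l ^ 2 + 2 * (l - l) ^ 2) * (6 * l - 4 * l)
            - 36 * (l ^ 2 + 2 * (l - l) ^ 2) * (6 * l + -(4 * l)))
          / (4 * (l ^ 2 + 2 * (l - l) ^ 2) ^ 4)
        = (-(12 * (1 - μ))) / l ^ 4 := by
      rw [div_eq_div_iff (mul_ne_zero (by norm_num) (pow_pos (hA l) 4).ne')
        (pow_pos hl0 4).ne']
      ring
    have c2 : μ * (1 - l)
          * ((15/2) * (6 * l - 4 * l - 2) * (6 * l + (-(4 * l) - 2)) ^ 2
            - 18 * ((l - 1) ^ 2 + 2 * (l - l) ^ 2) * (6 * l - 4 * l - 2)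
            - 36 * ((l - 1) ^ 2 + 2 * (l - l) ^ 2) * (6 * l + (-(4 * l) - 2)))
          / (4 * ((l - 1) ^ 2 + 2 * (l - l) ^ 2) ^ 4)
        = (12 * μ) / (1 - l) ^ 4 := by
      rw [div_eq_div_iff (mul_ne_zero (by norm_num) (pow_pos (hB l) 4).ne')
        (pow_pos h1l 4).ne']
      ring
    rw [c1, c2, neg_div]
    have hmu1 : (1 - μ + s) ^ 2 = (1 - μ) * (1 + 2 * s) := by linear_combination hs2
    have hmu2 : (μ + s) ^ 2 = μ * (1 + 2 * s) := by linear_combination hs2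
    have hsq1 : l ^ 2 * (1 - μ + s) ^ 2 = (1 - μ) ^ 2 := by
      linear_combination (l * (1 - μ + s) + (1 - μ)) * hA1
    have hsq2 : (1 - l) ^ 2 * (μ + s) ^ 2 = μ ^ 2 := by
      linear_combination ((1 - l) * (μ + s) + μ) * hB1
    have hAA : l ^ 2 * (1 + 2 * s) = 1 - μ := by
      have h : (1 - μ) * (l ^ 2 * (1 + 2 * s)) = (1 - μ) * (1 - μ) := by
        linear_combination hsq1 - l ^ 2 * hmu1
      have := mul_left_cancel₀ h1μ.ne' h
      linarith [this]
    have hBB : (1 - l) ^ 2 * (1 + 2 * s) = μ := by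
      have h : μ * ((1 - l) ^ 2 * (1 + 2 * s)) = μ * μ := by
        linear_combination hsq2 - (1 - l) ^ 2 * hmu2
      have := mul_left_cancel₀ hμ0.ne' h
      linarith [this]
    have k1 : (1 + 2 * s) ^ 2 * (1 - l) ^ 4 = μ ^ 2 := by
      linear_combination ((1 - l) ^ 2 * (1 + 2 * s) + μ) * hBB
    have k2 : (1 + 2 * s) ^ 2 * l ^ 4 = (1 - μ) ^ 2 := by
      linear_combination (l ^ 2 * (1 + 2 * s) + (1 - μ)) * hAA
    have h12 : (0:ℝ) < (1 + 2 * s) ^ 2 := by positivity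
    have hineq : 12 * (1 - μ) / l ^ 4 < 12 * μ / (1 - l) ^ 4 := by
      rw [div_lt_div_iff₀ (pow_pos hl0 4) (pow_pos h1l 4)]
      have hfin : (1 + 2 * s) ^ 2 * (12 * (1 - μ) * (1 - l) ^ 4)
          < (1 + 2 * s) ^ 2 * (12 * μ * l ^ 4) := by
        have eA : (1 + 2 * s) ^ 2 * (12 * (1 - μ) * (1 - l) ^ 4) = 12 * (1 - μ) * μ ^ 2 := by
          linear_combination 12 * (1 - μ) * k1
        have eB : (1 + 2 * s) ^ 2 * (12 * μ * l ^ 4) = 12 * μ * (1 - μ) ^ 2 := by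
          linear_combination 12 * μ * k2
        rw [eA, eB]
        nlinarith [mul_pos (mul_pos hμ0 h1μ) h2μ]
      exact lt_of_mul_lt_mul_left hfin h12.le
    linarith [hineq]
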